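/- (Eventown) Let n ∈ ℕ and let F be a family of subsets of [n] such that |F_1 ∩ F_2| is even for all F_1, F_2 ∈ F (including F_1 = F_2, so every member has even size). Then |F| ≤ 2^⌊n/2⌋. -/

import Mathlib

open Module Finset

section aux

variable (n : ℕ)

/-- indicator vector -/
private def indV (A : Finset (Fin n)) : Fin n → ZMod 2 := fun i => if i ∈ A then 1 else 0

private def dotB : LinearMap.BilinForm (ZMod 2) (Fin n → ZMod 2) :=
  LinearMap.mk₂ (ZMod 2) (fun u v => ∑ i, u i * v i)
    (by intro u u' v; simp [add_mul, Finset.sum_add_distrib])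
    (by intro c u v; simp [Finset.mul_sum, mul_assoc])
    (by intro u v v'; simp [mul_add, Finset.sum_add_distrib])
    (by intro c u v; simp only [smul_eq_mul, Pi.smul_apply, Finset.mul_sum]; exact Finset.sum_congr rfl fun i _ => by ring)

private lemma dotB_apply (u v : Fin n → ZMod 2) : dotB n u v = ∑ i, u i * v i := rfl

private lemma dotB_symm : (dotB n).IsSymm := by
  refine LinearMap.BilinForm.isSymm_def.mpr ?_
  intro u v
  simp [dotB_apply, mul_comm]

private lemma dotB_nondeg : (dotB n).Nondegenerate := by
  refine ⟨?_, ?_⟩ <;> intro u hu <;> funext i <;> have := hu (Pi.single i 1) <;>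
  simpa [dotB_apply, Pi.single_apply, mul_ite, mul_comm] using this

private lemma indV_inj : Function.Injective (indV n) := by
  intro A B hAB
  ext i
  have := congr_fun hAB i
  simp only [indV] at this
  by_cases hA : i ∈ A <;> by_cases hB : i ∈ B <;> simp [hA, hB] at this ⊢

private lemma dotB_indV (A B : Finset (Fin n)) :
    dotB n (indV n A) (indV n B) = ((A ∩ B).card : ZMod 2) := by
  simp only [dotB_apply, indV, ite_mul, one_mul, zero_mul]
  have : ∀ x, (if x ∈ A then if x ∈ B then (1:ZMod 2) else 0 else 0)
      = if x ∈ A ∩ B then 1 else 0 := by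
    intro x; by_cases hA : x ∈ A <;> by_cases hB : x ∈ B <;> simp [hA, hB]
  simp_rw [this]
  rw [Finset.sum_ite_mem, Finset.univ_inter, Finset.sum_const, Finset.card_eq_sum_ones (A ∩ B)]
  push_cast
  simp

end aux

/-- Eventown theorem: a family of subsets of `[n]` all of whose pairwise
(including self-) intersections have even size has at most `2^⌊n/2⌋` members. -/
theorem eventown (n : ℕ) (F : Finset (Finset (Fin n)))
    (h : ∀ A ∈ F, ∀ B ∈ F, Even (A ∩ B).card) :
    F.card ≤ 2 ^ (n / 2) := by
  classical
  set S : Finset (Fin n → ZMod 2) := F.image (indV n) with hSdef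
  set W : Submodule (ZMod 2) (Fin n → ZMod 2) := Submodule.span (ZMod 2) (S : Set _) with hWdef
  have hS : ∀ u ∈ S, ∀ v ∈ S, dotB n u v = 0 := by
    intro u hu v hv
    simp only [hSdef, Finset.mem_image] at hu hv
    obtain ⟨A, hA, rfl⟩ := hu
    obtain ⟨B, hB, rfl⟩ := hv
    rw [dotB_indV]
    exact (ZMod.natCast_eq_zero_iff _ 2).mpr ((h A hA B hB).two_dvd)
  have hWle : W ≤ (dotB n).orthogonal W := by
    rw [hWdef, Submodule.span_le]
    intro u hu
    rw [SetLike.mem_coe, LinearMap.BilinForm.mem_orthogonal_iff]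
    intro w hw
    induction hw using Submodule.span_induction with
    | mem x hx => exact hS x hx u hu
    | zero => simp [LinearMap.BilinForm.IsOrtho]
    | add x y _ _ hx hy =>
        simp only [LinearMap.BilinForm.IsOrtho, map_add, LinearMap.add_apply] at hx hy ⊢
        rw [hx, hy, add_zero]
    | smul c x _ hx =>
        simp only [LinearMap.BilinForm.IsOrtho, map_smul, LinearMap.smul_apply] at hx ⊢
        rw [hx, smul_zero]
  have hfr : Module.finrank (ZMod 2) W ≤ n / 2 := by
    have h1 := LinearMap.BilinForm.finrank_orthogonal (dotB_nondeg n) W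
    have h2 : Module.finrank (ZMod 2) W ≤ Module.finrank (ZMod 2) ((dotB n).orthogonal W) :=
      Submodule.finrank_mono hWle
    have h3 : Module.finrank (ZMod 2) (Fin n → ZMod 2) = n := Module.finrank_fin_fun (ZMod 2)
    rw [h3] at h1
    have h4 : Module.finrank (ZMod 2) W ≤ Module.finrank (ZMod 2) (Fin n → ZMod 2) :=
      Submodule.finrank_le W
    rw [h3] at h4
    omega
  haveI : Fintype W := Fintype.ofFinite W
  have hcardW : Fintype.card W = 2 ^ Module.finrank (ZMod 2) W := by
    rw [card_eq_pow_finrank (K := ZMod 2), ZMod.card]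
  have hSW : ∀ u ∈ S, u ∈ W := fun u hu => Submodule.subset_span hu
  have hinj : Function.Injective (fun x : {u // u ∈ S} => (⟨x.1, hSW x.1 x.2⟩ : W)) := by
    intro a b hab
    simp only [Subtype.mk.injEq] at hab
    exact Subtype.ext hab
  have hle : S.card ≤ Fintype.card W := by
    rw [← Fintype.card_coe]
    exact Fintype.card_le_of_injective _ hinj
  have hFS : F.card = S.card := (Finset.card_image_of_injective F (indV_inj n)).symm
  calc F.card = S.card := hFS
    _ ≤ Fintype.card W := hle
    _ = 2 ^ Module.finrank (ZMod 2) W := hcardW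
    _ ≤ 2 ^ (n / 2) := Nat.pow_le_pow_right (by norm_num) hfr
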